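/- arXiv:2303.02090 — 7 statements merged into one kernel-verified Lean document; each statement's English description precedes it below -/
import Mathlib

section
/- Let A_RK = UΣVᵀ be a singular value decomposition of a real s×s matrix (U, V real orthogonal, Σ diagonal with positive diagonal entries), let M be a symmetric positive definite real n×n matrix, K a symmetric positive semidefinite real n×n matrix, and τ > 0. Assume that for every nonzero complex vector y ∈ ℂˢ the real part of the Rayleigh quotient y*(UᵀV)y/(y*y) is positive. Then every generalized eigenvalue λ ∈ ℂ of the pair (Θ, P_RK) — i.e., every λ ∈ ℂ for which there exists a nonzero x ∈ ℂ^{s·n} with Θx = λ P_RK x — satisfies Re λ > 0 and |λ| ≤ 1; that is, λ lies in the right half of the closed unit disk centered at the origin of the complex plane. -/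
open Matrix Kronecker

set_option linter.unusedSectionVars false
set_option maxHeartbeats 1000000

section Aux
variable {m : Type*} [Fintype m] [DecidableEq m]

lemma aux_map_mul (A B : Matrix m m ℝ) : (A * B).map Complex.ofReal
    = A.map Complex.ofReal * B.map Complex.ofReal := by
  ext i j; simp [Matrix.mul_apply, Matrix.map_apply]

lemma aux_map_one : ((1 : Matrix m m ℝ)).map Complex.ofReal = 1 := by
  ext i j
  simp only [Matrix.map_apply, Matrix.one_apply]
  split <;> simp

lemma aux_map_add (A B : Matrix m m ℝ) : (A + B).map Complex.ofReal
    = A.map Complex.ofReal + B.map Complex.ofReal := by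
  ext i j; simp [Matrix.map_apply]

lemma aux_map_smul (t : ℝ) (A : Matrix m m ℝ) : (t • A).map Complex.ofReal
    = (t : ℂ) • A.map Complex.ofReal := by
  ext i j; simp [Matrix.map_apply]

lemma aux_ct_map (A : Matrix m m ℝ) : (A.map Complex.ofReal)ᴴ = Aᵀ.map Complex.ofReal := by
  ext i j; simp [Matrix.conjTranspose_apply, Matrix.map_apply]

lemma aux_star_dot_self (w : m → ℂ) :
    star w ⬝ᵥ w = ((∑ i, Complex.normSq (w i) : ℝ) : ℂ) := by
  push_cast
  simp [dotProduct, Pi.star_apply, Complex.normSq_eq_conj_mul_self]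

lemma aux_star_mulVec_dot (B : Matrix m m ℂ) (v y : m → ℂ) :
    star (B *ᵥ v) ⬝ᵥ y = star v ⬝ᵥ (Bᴴ *ᵥ y) := by
  rw [star_mulVec, ← dotProduct_mulVec]

lemma aux_mulVec_ne_zero (A : Matrix m m ℂ) (hdet : A.det ≠ 0) (z : m → ℂ) (hz : z ≠ 0) :
    A *ᵥ z ≠ 0 := by
  intro h
  apply hz
  have h1 : A⁻¹ *ᵥ (A *ᵥ z) = z := by
    rw [mulVec_mulVec, Matrix.nonsing_inv_mul _ (isUnit_iff_ne_zero.mpr hdet), one_mulVec]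
  rw [h, mulVec_zero] at h1
  exact h1.symm

lemma aux_sum_normSq_pos {w : m → ℂ} (hw : w ≠ 0) : 0 < ∑ i, Complex.normSq (w i) := by
  rcases Function.ne_iff.mp hw with ⟨i, hi⟩
  refine Finset.sum_pos' (fun j _ => Complex.normSq_nonneg _) ⟨i, Finset.mem_univ i, ?_⟩
  simpa [Complex.normSq_pos] using hi

lemma aux_quad_self (S : Matrix m m ℝ) (hS : Sᵀ = S) (z : m → ℂ) :
    star z ⬝ᵥ (((S * S).map Complex.ofReal) *ᵥ z)
      = ((∑ i, Complex.normSq ((S.map Complex.ofReal *ᵥ z) i) : ℝ) : ℂ) := by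
  rw [aux_map_mul, ← mulVec_mulVec, ← aux_star_dot_self]
  have h := aux_star_mulVec_dot (S.map Complex.ofReal) z (S.map Complex.ofReal *ᵥ z)
  rw [h, aux_ct_map, hS]

lemma aux_cs_dot (u v : m → ℂ) : ‖star u ⬝ᵥ v‖
    ≤ Real.sqrt ((star u ⬝ᵥ u).re) * Real.sqrt ((star v ⬝ᵥ v).re) := by
  have hi : ∀ a b : m → ℂ,
      (inner ℂ ((WithLp.equiv 2 _).symm a) ((WithLp.equiv 2 _).symm b) : ℂ) = star a ⬝ᵥ b := by
    intro a b
    simp [PiLp.inner_apply, dotProduct, Pi.star_apply, mul_comm]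
  have h1 : ‖(inner ℂ ((WithLp.equiv 2 (m → ℂ)).symm u) ((WithLp.equiv 2 (m → ℂ)).symm v) : ℂ)‖
      ≤ ‖(WithLp.equiv 2 (m → ℂ)).symm u‖ * ‖(WithLp.equiv 2 (m → ℂ)).symm v‖ :=
    norm_inner_le_norm _ _
  have hu : ‖(WithLp.equiv 2 (m → ℂ)).symm u‖ = Real.sqrt ((star u ⬝ᵥ u).re) := by
    rw [@norm_eq_sqrt_re_inner ℂ, hi]; simp [RCLike.re_to_complex]
  have hv : ‖(WithLp.equiv 2 (m → ℂ)).symm v‖ = Real.sqrt ((star v ⬝ᵥ v).re) := by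
    rw [@norm_eq_sqrt_re_inner ℂ, hi]; simp [RCLike.re_to_complex]
  rw [hi, hu, hv] at h1
  simpa using h1

end Aux

lemma aux_slice_quad {s n : ℕ} (Q : Matrix (Fin s) (Fin s) ℝ) (u : Fin s × Fin n → ℂ) :
    star u ⬝ᵥ ((Q ⊗ₖ (1 : Matrix (Fin n) (Fin n) ℝ)).map Complex.ofReal) *ᵥ u
    = ∑ j : Fin n, (star (fun i => u (i, j)) ⬝ᵥ (Q.map Complex.ofReal) *ᵥ (fun i => u (i, j))) := by
  simp only [dotProduct, Matrix.mulVec, Matrix.map_apply, kroneckerMap_apply, Matrix.one_apply,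
    Fintype.sum_prod_type, Pi.star_apply]
  rw [Finset.sum_comm]
  refine Finset.sum_congr rfl fun j _ => Finset.sum_congr rfl fun i _ => ?_
  congr 1
  rw [Finset.sum_comm]
  simp [apply_ite, Finset.sum_ite_eq', mul_ite]

open scoped MatrixOrder in
lemma aux_psd_sqrt {n : ℕ} {A : Matrix (Fin n) (Fin n) ℝ} (hA : A.PosSemidef) :
    ∃ S : Matrix (Fin n) (Fin n) ℝ, S * S = A ∧ Sᴴ = S :=
  ⟨CFC.sqrt A, CFC.sqrt_mul_sqrt_self A (Matrix.nonneg_iff_posSemidef.mpr hA),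
    (Matrix.nonneg_iff_posSemidef.mp (CFC.sqrt_nonneg A)).1⟩

theorem stmt_0 {s n : ℕ} (hs : 0 < s) (hn : 0 < n)
    (U V : Matrix (Fin s) (Fin s) ℝ) (hU : Uᵀ * U = 1) (hV : Vᵀ * V = 1)
    (d : Fin s → ℝ) (hd : ∀ i, 0 < d i)
    (M K : Matrix (Fin n) (Fin n) ℝ) (hM : M.PosDef) (hK : K.PosSemidef)
    (τ : ℝ) (hτ : 0 < τ)
    (hray : ∀ y : Fin s → ℂ, y ≠ 0 →
      0 < ((star y ⬝ᵥ ((Uᵀ * V).map Complex.ofReal) *ᵥ y) / (star y ⬝ᵥ y)).re)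
    (Θ P_RK : Matrix (Fin s × Fin n) (Fin s × Fin n) ℝ)
    (hΘ : Θ = (1 : Matrix (Fin s) (Fin s) ℝ) ⊗ₖ M +
        τ • ((U * Matrix.diagonal d * Vᵀ) ⊗ₖ K))
    (hP : P_RK = (U ⊗ₖ (1 : Matrix (Fin n) (Fin n) ℝ)) *
        ((1 : Matrix (Fin s) (Fin s) ℝ) ⊗ₖ M + τ • (Matrix.diagonal d ⊗ₖ K)) *
        (Vᵀ ⊗ₖ (1 : Matrix (Fin n) (Fin n) ℝ)))
    (lam : ℂ)
    (hlam : ∃ x : Fin s × Fin n → ℂ, x ≠ 0 ∧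
      (Θ.map Complex.ofReal) *ᵥ x = lam • ((P_RK.map Complex.ofReal) *ᵥ x)) :
    0 < lam.re ∧ ‖lam‖ ≤ 1 := by
  obtain ⟨x, hx0, heq⟩ := hlam
  have hUU : U * Uᵀ = 1 := mul_eq_one_comm.mp hU
  have hVV : V * Vᵀ = 1 := mul_eq_one_comm.mp hV
  set Q : Matrix (Fin s) (Fin s) ℝ := Uᵀ * V with hQdef
  set Sg : Matrix (Fin s) (Fin s) ℝ := Matrix.diagonal d with hSgef
  -- the transformed vector
  obtain ⟨w, hwdef⟩ : ∃ w : Fin s × Fin n → ℂ,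
      w = ((Vᵀ ⊗ₖ (1 : Matrix (Fin n) (Fin n) ℝ)).map Complex.ofReal) *ᵥ x := ⟨_, rfl⟩
  have hxw : ((V ⊗ₖ (1 : Matrix (Fin n) (Fin n) ℝ)).map Complex.ofReal) *ᵥ w = x := by
    rw [hwdef, mulVec_mulVec, ← aux_map_mul, ← mul_kronecker_mul, hVV, Matrix.one_mul,
      one_kronecker_one, aux_map_one, one_mulVec]
  have hw0 : w ≠ 0 := by
    intro h
    apply hx0
    rw [← hxw, h, mulVec_zero]
  -- transformed matrices
  have hN : (Uᵀ ⊗ₖ (1 : Matrix (Fin n) (Fin n) ℝ)) * Θ * (V ⊗ₖ (1 : Matrix (Fin n) (Fin n) ℝ))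
      = Q ⊗ₖ M + τ • (Sg ⊗ₖ K) := by
    rw [hΘ, Matrix.mul_add, Matrix.add_mul, Matrix.mul_smul, Matrix.smul_mul]
    congr 1
    · rw [← mul_kronecker_mul, ← mul_kronecker_mul]
      simp [hQdef]
    · congr 1
      have hmid : Uᵀ * (U * Sg * Vᵀ) * V = Sg := by
        simp only [← Matrix.mul_assoc]
        rw [hU, Matrix.one_mul, Matrix.mul_assoc, hV, Matrix.mul_one]
      have hk : (1 : Matrix (Fin n) (Fin n) ℝ) * K * 1 = K := by simp
      rw [← mul_kronecker_mul, ← mul_kronecker_mul, hmid, hk]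
  have hH : (Uᵀ ⊗ₖ (1 : Matrix (Fin n) (Fin n) ℝ)) * P_RK * (V ⊗ₖ (1 : Matrix (Fin n) (Fin n) ℝ))
      = (1 : Matrix (Fin s) (Fin s) ℝ) ⊗ₖ M + τ • (Sg ⊗ₖ K) := by
    rw [hP]
    have h1 : (Uᵀ ⊗ₖ (1 : Matrix (Fin n) (Fin n) ℝ)) * (U ⊗ₖ (1 : Matrix (Fin n) (Fin n) ℝ))
        = 1 := by rw [← mul_kronecker_mul, hU, Matrix.one_mul, one_kronecker_one]
    have h2 : (Vᵀ ⊗ₖ (1 : Matrix (Fin n) (Fin n) ℝ)) * (V ⊗ₖ (1 : Matrix (Fin n) (Fin n) ℝ))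
        = 1 := by rw [← mul_kronecker_mul, hV, Matrix.one_mul, one_kronecker_one]
    calc (Uᵀ ⊗ₖ (1 : Matrix (Fin n) (Fin n) ℝ)) *
          ((U ⊗ₖ (1 : Matrix (Fin n) (Fin n) ℝ)) *
            ((1 : Matrix (Fin s) (Fin s) ℝ) ⊗ₖ M + τ • (Sg ⊗ₖ K)) *
            (Vᵀ ⊗ₖ (1 : Matrix (Fin n) (Fin n) ℝ))) * (V ⊗ₖ (1 : Matrix (Fin n) (Fin n) ℝ))
        = ((Uᵀ ⊗ₖ (1 : Matrix (Fin n) (Fin n) ℝ)) * (U ⊗ₖ (1 : Matrix (Fin n) (Fin n) ℝ))) *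
            ((1 : Matrix (Fin s) (Fin s) ℝ) ⊗ₖ M + τ • (Sg ⊗ₖ K)) *
            ((Vᵀ ⊗ₖ (1 : Matrix (Fin n) (Fin n) ℝ)) * (V ⊗ₖ (1 : Matrix (Fin n) (Fin n) ℝ))) := by
          simp only [Matrix.mul_assoc]
      _ = _ := by rw [h1, h2, Matrix.one_mul, Matrix.mul_one]
  -- transformed eigen equation
  have heqw : ((Q ⊗ₖ M + τ • (Sg ⊗ₖ K)).map Complex.ofReal) *ᵥ w
      = lam • ((((1 : Matrix (Fin s) (Fin s) ℝ) ⊗ₖ M + τ • (Sg ⊗ₖ K)).map Complex.ofReal) *ᵥ w) := by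
    rw [← hN, ← hH, aux_map_mul, aux_map_mul, aux_map_mul, aux_map_mul,
      ← mulVec_mulVec, ← mulVec_mulVec, ← mulVec_mulVec, ← mulVec_mulVec, hxw, heq,
      mulVec_smul]
  -- scalar equation
  have hscal : star w ⬝ᵥ (((Q ⊗ₖ M + τ • (Sg ⊗ₖ K)).map Complex.ofReal) *ᵥ w)
      = lam * (star w ⬝ᵥ ((((1 : Matrix (Fin s) (Fin s) ℝ) ⊗ₖ M + τ • (Sg ⊗ₖ K)).map Complex.ofReal) *ᵥ w)) := by
    rw [heqw, dotProduct_smul, smul_eq_mul]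
  set α : ℂ := star w ⬝ᵥ (((Q ⊗ₖ M).map Complex.ofReal) *ᵥ w) with hαdef
  set β : ℂ := star w ⬝ᵥ (((Sg ⊗ₖ K).map Complex.ofReal) *ᵥ w) with hβdef
  set μ : ℂ := star w ⬝ᵥ ((((1 : Matrix (Fin s) (Fin s) ℝ) ⊗ₖ M).map Complex.ofReal) *ᵥ w) with hμdef
  have key : α + (τ : ℂ) * β = lam * (μ + (τ : ℂ) * β) := by
    rw [hαdef, hβdef, hμdef]
    have e1 : ∀ (A B : Matrix (Fin s × Fin n) (Fin s × Fin n) ℝ),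
        star w ⬝ᵥ (((A + τ • B).map Complex.ofReal) *ᵥ w)
        = star w ⬝ᵥ ((A.map Complex.ofReal) *ᵥ w)
          + (τ : ℂ) * (star w ⬝ᵥ ((B.map Complex.ofReal) *ᵥ w)) := by
      intro A B
      rw [aux_map_add, aux_map_smul, add_mulVec, smul_mulVec, dotProduct_add,
        dotProduct_smul, smul_eq_mul]
    rw [← e1, ← e1]
    exact hscal
  -- β is a nonnegative real
  set Sd : Matrix (Fin s) (Fin s) ℝ := Matrix.diagonal (fun i => Real.sqrt (d i)) with hSddef
  have hSd : Sd * Sd = Sg := by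
    rw [hSddef, Matrix.diagonal_mul_diagonal, hSgef]
    have hfun : (fun i => Real.sqrt (d i) * Real.sqrt (d i)) = d := by
      funext i
      exact Real.mul_self_sqrt (hd i).le
    rw [hfun]
  obtain ⟨SK, hSK, hSKh⟩ := aux_psd_sqrt hK
  have hSKt : SKᵀ = SK := by
    rw [← Matrix.conjTranspose_eq_transpose_of_trivial]
    exact hSKh
  have hfactt : (Sd ⊗ₖ SK)ᵀ = Sd ⊗ₖ SK := by
    rw [← kroneckerMap_transpose]
    rw [Matrix.diagonal_transpose, hSKt]
  have hfact : (Sd ⊗ₖ SK) * (Sd ⊗ₖ SK) = Sg ⊗ₖ K := by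
    rw [← mul_kronecker_mul, hSd, hSK]
  obtain ⟨b, hb0, hβ⟩ : ∃ b : ℝ, 0 ≤ b ∧ β = (b : ℂ) := by
    refine ⟨∑ i, Complex.normSq (((Sd ⊗ₖ SK).map Complex.ofReal *ᵥ w) i),
      Finset.sum_nonneg fun i _ => Complex.normSq_nonneg _, ?_⟩
    rw [hβdef, ← hfact]
    exact aux_quad_self _ hfactt w
  -- the vector u
  obtain ⟨SM, hSM, hSMh⟩ := aux_psd_sqrt hM.posSemidef
  have hSMt : SMᵀ = SM := by
    rw [← Matrix.conjTranspose_eq_transpose_of_trivial]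
    exact hSMh
  set B : Matrix (Fin s × Fin n) (Fin s × Fin n) ℂ :=
    ((1 : Matrix (Fin s) (Fin s) ℝ) ⊗ₖ SM).map Complex.ofReal with hBdef
  have hBt : ((1 : Matrix (Fin s) (Fin s) ℝ) ⊗ₖ SM)ᵀ = (1 : Matrix (Fin s) (Fin s) ℝ) ⊗ₖ SM := by
    rw [← kroneckerMap_transpose, Matrix.transpose_one, hSMt]
  have hBH : Bᴴ = B := by rw [hBdef, aux_ct_map, hBt]
  have hBB : B * B = (((1 : Matrix (Fin s) (Fin s) ℝ) ⊗ₖ M).map Complex.ofReal) := by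
    rw [hBdef, ← aux_map_mul, ← mul_kronecker_mul, Matrix.one_mul, hSM]
  obtain ⟨u, hudef⟩ : ∃ u : Fin s × Fin n → ℂ, u = B *ᵥ w := ⟨_, rfl⟩
  have hμu : μ = star u ⬝ᵥ u := by
    have h1 : star (B *ᵥ w) ⬝ᵥ (B *ᵥ w) = star w ⬝ᵥ ((Bᴴ * B) *ᵥ w) := by
      rw [aux_star_mulVec_dot, mulVec_mulVec]
    rw [hμdef, hudef, h1, hBH, hBB]
  set C : Matrix (Fin s × Fin n) (Fin s × Fin n) ℂ :=
    (Q ⊗ₖ (1 : Matrix (Fin n) (Fin n) ℝ)).map Complex.ofReal with hCdef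
  have hαu : α = star u ⬝ᵥ (C *ᵥ u) := by
    have hBCB : B * C * B = (Q ⊗ₖ M).map Complex.ofReal := by
      have e1 : (1 : Matrix (Fin s) (Fin s) ℝ) * Q * 1 = Q := by simp
      have e2 : SM * 1 * SM = M := by rw [Matrix.mul_one, hSM]
      rw [hBdef, hCdef, ← aux_map_mul, ← aux_map_mul, ← mul_kronecker_mul, ← mul_kronecker_mul,
        e1, e2]
    have h1 : star (B *ᵥ w) ⬝ᵥ (C *ᵥ (B *ᵥ w)) = star w ⬝ᵥ ((Bᴴ * C * B) *ᵥ w) := by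
      rw [aux_star_mulVec_dot, mulVec_mulVec, mulVec_mulVec]
    rw [hαdef, hudef, h1, hBH, hBCB]
  -- μ = r > 0
  obtain ⟨r, hμr⟩ : ∃ r : ℝ, μ = (r : ℂ) ∧ r = ∑ i, Complex.normSq (u i) := by
    refine ⟨∑ i, Complex.normSq (u i), ?_, rfl⟩
    rw [hμu, aux_star_dot_self]
  obtain ⟨hμr, hrval⟩ := hμr
  have hdet1M : (((1 : Matrix (Fin s) (Fin s) ℝ) ⊗ₖ M).map Complex.ofReal).det ≠ 0 := by
    have h1 : (((1 : Matrix (Fin s) (Fin s) ℝ) ⊗ₖ M).map Complex.ofReal).det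
        = Complex.ofReal (((1 : Matrix (Fin s) (Fin s) ℝ) ⊗ₖ M).det) :=
      (RingHom.map_det Complex.ofRealHom _).symm
    rw [h1, det_kronecker]
    simp only [Matrix.det_one, one_pow, one_mul]
    exact Complex.ofReal_ne_zero.mpr (pow_ne_zero _ hM.det_pos.ne')
  have hu0 : u ≠ 0 := by
    intro h
    have h2 : (((1 : Matrix (Fin s) (Fin s) ℝ) ⊗ₖ M).map Complex.ofReal) *ᵥ w = 0 := by
      rw [← hBB, ← mulVec_mulVec, ← hudef, h, mulVec_zero]
    exact aux_mulVec_ne_zero _ hdet1M w hw0 h2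
  have hr : 0 < r := by rw [hrval]; exact aux_sum_normSq_pos hu0
  -- |α| ≤ r
  have hCH : Cᴴ * C = 1 := by
    rw [hCdef, aux_ct_map, ← aux_map_mul, ← kroneckerMap_transpose, Matrix.transpose_one,
      ← mul_kronecker_mul]
    have hQQ : Qᵀ * Q = 1 := by
      rw [hQdef, Matrix.transpose_mul, Matrix.transpose_transpose, Matrix.mul_assoc,
        ← Matrix.mul_assoc U Uᵀ V, hUU, Matrix.one_mul, hV]
    rw [hQQ, Matrix.one_mul, one_kronecker_one, aux_map_one]
  have hvv : star (C *ᵥ u) ⬝ᵥ (C *ᵥ u) = star u ⬝ᵥ u := by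
    rw [aux_star_mulVec_dot, mulVec_mulVec, hCH, one_mulVec]
  have habs : ‖α‖ ≤ r := by
    have h1 := aux_cs_dot u (C *ᵥ u)
    rw [hvv] at h1
    have h2 : (star u ⬝ᵥ u).re = r := by
      rw [← hμu, hμr, Complex.ofReal_re]
    rw [h2, Real.mul_self_sqrt hr.le] at h1
    rw [hαu]
    exact h1
  -- Re α > 0
  have hkey : ∀ y : Fin s → ℂ, y ≠ 0 →
      0 < (star y ⬝ᵥ (Q.map Complex.ofReal) *ᵥ y).re := by
    intro y hy
    have h := hray y hy
    have ht : 0 < ∑ i, Complex.normSq (y i) := aux_sum_normSq_pos hy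
    have hden : star y ⬝ᵥ y = ((∑ i, Complex.normSq (y i) : ℝ) : ℂ) := aux_star_dot_self y
    set t : ℝ := ∑ i, Complex.normSq (y i)
    have hnum : star y ⬝ᵥ (Q.map Complex.ofReal) *ᵥ y
        = ((star y ⬝ᵥ (Q.map Complex.ofReal) *ᵥ y) / (star y ⬝ᵥ y)) * (t : ℂ) := by
      rw [hden, div_mul_cancel₀ _ (Complex.ofReal_ne_zero.mpr ht.ne')]
    rw [hnum, Complex.mul_re, Complex.ofReal_re, Complex.ofReal_im, mul_zero, sub_zero]
    exact mul_pos h ht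
  have hre : 0 < α.re := by
    rw [hαu, hCdef, aux_slice_quad]
    rw [Complex.re_sum]
    rcases Function.ne_iff.mp hu0 with ⟨⟨i0, j0⟩, hij⟩
    refine Finset.sum_pos' (fun j _ => ?_) ⟨j0, Finset.mem_univ j0, ?_⟩
    · by_cases hcol : (fun i => u (i, j)) = 0
      · rw [hcol]
        simp
      · exact (hkey _ hcol).le
    · apply hkey
      intro hcol
      exact hij (congrFun hcol i0)
  -- final algebra
  have hD : 0 < r + τ * b := by positivity
  have hlamval : lam = (α + ((τ * b : ℝ) : ℂ)) / ((r + τ * b : ℝ) : ℂ) := by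
    rw [eq_div_iff (by exact_mod_cast hD.ne')]
    rw [hβ, hμr] at key
    push_cast
    linear_combination (-1 : ℂ) * key
  constructor
  · rw [hlamval]
    rw [Complex.div_ofReal_re]
    apply div_pos _ hD
    rw [Complex.add_re, Complex.ofReal_re]
    have : 0 ≤ τ * b := by positivity
    linarith
  · rw [hlamval, norm_div, Complex.norm_real, Real.norm_of_nonneg hD.le]
    rw [div_le_one hD]
    calc ‖α + ((τ * b : ℝ) : ℂ)‖
        ≤ ‖α‖ + ‖((τ * b : ℝ) : ℂ)‖ := norm_add_le _ _
      _ = ‖α‖ + (τ * b) := by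
          rw [Complex.norm_real, Real.norm_of_nonneg (by positivity)]
      _ ≤ r + τ * b := by linarith
end

section
/- Let A_RK = UΣVᵀ be a singular value decomposition of a real s×s matrix (U, V real orthogonal, Σ diagonal with positive diagonal entries), let M be a symmetric positive definite real n×n matrix, K a symmetric positive semidefinite real n×n matrix, and τ > 0. Assume that for every nonzero complex vector y ∈ ℂˢ the real part of the Rayleigh quotient y*(UᵀV)y/(y*y) is positive. Suppose 1 is an eigenvalue of UᵀV (over ℂ) with geometric multiplicity k ≥ 1, i.e., the complex subspace {y ∈ ℂˢ : (UᵀV)y = y} has dimension k. Then the complex subspace {x ∈ ℂ^{s·n} : Θx = P_RK x} has dimension at least k·n; that is, 1 is a generalized eigenvalue of the pair (Θ, P_RK) with geometric multiplicity at least k·n. -/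
open Matrix Kronecker

noncomputable def mc {m p : Type*} (A : Matrix m p ℝ) : Matrix m p ℂ :=
  A.map Complex.ofReal

lemma mc_mul {m p q : Type*} [Fintype p] (A : Matrix m p ℝ) (B : Matrix p q ℝ) :
    mc (A * B) = mc A * mc B := Matrix.map_mul (f := Complex.ofRealHom)

lemma mc_one {m : Type*} [Fintype m] [DecidableEq m] : mc (1 : Matrix m m ℝ) = 1 := by
  ext i j
  simp only [mc, Matrix.map_apply, Matrix.one_apply]
  split <;> simp

lemma mc_sub {m p : Type*} (A B : Matrix m p ℝ) : mc (A - B) = mc A - mc B := by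
  ext i j; simp [mc]

lemma mc_transpose {m p : Type*} (A : Matrix m p ℝ) : mc Aᵀ = (mc A)ᵀ := by
  ext i j; simp [mc]

lemma mc_kron {a b : Type*} (A : Matrix a a ℝ) (B : Matrix b b ℝ) :
    mc (A ⊗ₖ B) = mc A ⊗ₖ mc B := by
  ext ⟨i, j⟩ ⟨p, q⟩
  simp [mc, Matrix.kroneckerMap_apply]

/-- rank-nullity for square complex matrices: equal rank gives equal nullity. -/
lemma nullity_eq_of_rank_eq {m : ℕ} (A B : Matrix (Fin m) (Fin m) ℂ) (h : A.rank = B.rank) :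
    Module.finrank ℂ (LinearMap.ker A.mulVecLin)
      = Module.finrank ℂ (LinearMap.ker B.mulVecLin) := by
  have hA := LinearMap.finrank_range_add_finrank_ker A.mulVecLin
  have hB := LinearMap.finrank_range_add_finrank_ker B.mulVecLin
  rw [show Module.finrank ℂ (LinearMap.range A.mulVecLin) = A.rank from rfl] at hA
  rw [show Module.finrank ℂ (LinearMap.range B.mulVecLin) = B.rank from rfl] at hB
  omega

lemma rank_neg {m : ℕ} (A : Matrix (Fin m) (Fin m) ℂ) : (-A).rank = A.rank := by
  have h : -A = A * (-1) := by simp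
  rw [h]
  refine Matrix.rank_mul_eq_left_of_isUnit_det (-1) A ?_
  have : ((-1 : Matrix (Fin m) (Fin m) ℂ)).det = (-1) ^ m := by
    rw [show (-1 : Matrix (Fin m) (Fin m) ℂ) = -(1 : Matrix (Fin m) (Fin m) ℂ) from rfl,
      Matrix.det_neg]
    simp
  rw [this]
  exact (IsUnit.neg isUnit_one).pow m

lemma kron_mulVec {a b : ℕ} (A : Matrix (Fin a) (Fin a) ℂ) (B : Matrix (Fin b) (Fin b) ℂ)
    (u : Fin a → ℂ) (v : Fin b → ℂ) :
    (A ⊗ₖ B) *ᵥ (fun pq => u pq.1 * v pq.2) = fun pq => (A *ᵥ u) pq.1 * (B *ᵥ v) pq.2 := by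
  funext ⟨i, j⟩
  simp only [Matrix.mulVec, dotProduct, Fintype.sum_prod_type, Matrix.kronecker_apply]
  rw [Finset.sum_mul_sum]
  refine Finset.sum_congr rfl fun x _ => Finset.sum_congr rfl fun y _ => ?_
  ring

lemma ker_kron_ge {sN nN : ℕ} (A : Matrix (Fin sN) (Fin sN) ℂ) (Mn : Matrix (Fin nN) (Fin nN) ℂ)
    (hMn : IsUnit Mn.det) :
    nN * Module.finrank ℂ (LinearMap.ker A.mulVecLin) ≤
      Module.finrank ℂ (LinearMap.ker (A ⊗ₖ Mn).mulVecLin) := by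
  set W := LinearMap.ker A.mulVecLin with hW
  let Φ₀ : (Fin nN → W) →ₗ[ℂ] (Fin sN × Fin nN → ℂ) :=
    { toFun := fun g pq => ∑ t, (Mn⁻¹) pq.2 t * (g t : Fin sN → ℂ) pq.1
      map_add' := by
        intro g h
        funext pq
        simp [mul_add, Finset.sum_add_distrib]
      map_smul' := by
        intro c g
        funext pq
        simp [Finset.mul_sum]
        exact Finset.sum_congr rfl fun t _ => by ring }
  have hmem : ∀ g, Φ₀ g ∈ LinearMap.ker (A ⊗ₖ Mn).mulVecLin := by
    intro g
    rw [LinearMap.mem_ker]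
    have hexp : Φ₀ g = ∑ t, (fun pq : Fin sN × Fin nN =>
        (g t : Fin sN → ℂ) pq.1 * (Mn⁻¹) pq.2 t) := by
      rw [Finset.sum_fn]
      funext pq
      show (∑ t, (Mn⁻¹) pq.2 t * (g t : Fin sN → ℂ) pq.1) = _
      exact Finset.sum_congr rfl fun t _ => mul_comm _ _
    rw [hexp, map_sum]
    refine Finset.sum_eq_zero fun t _ => ?_
    have h0 : A *ᵥ (g t : Fin sN → ℂ) = 0 := (g t).2
    have hkv := kron_mulVec A Mn (g t : Fin sN → ℂ) (fun q => (Mn⁻¹) q t)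
    rw [Matrix.mulVecLin_apply]
    calc (A ⊗ₖ Mn) *ᵥ (fun pq : Fin sN × Fin nN => (g t : Fin sN → ℂ) pq.1 * (Mn⁻¹) pq.2 t)
        = fun pq => (A *ᵥ (g t : Fin sN → ℂ)) pq.1 * (Mn *ᵥ fun q => (Mn⁻¹) q t) pq.2 := hkv
      _ = 0 := by rw [h0]; funext pq; simp
  have hinj : Function.Injective Φ₀ := by
    rw [injective_iff_map_eq_zero]
    intro g hg
    funext t
    refine Subtype.ext (funext fun p => ?_)
    have hqs : ∀ q, ((Mn⁻¹) *ᵥ fun t' => (g t' : Fin sN → ℂ) p) q = 0 := by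
      intro q
      have := congrFun hg (p, q)
      simpa [Φ₀, Matrix.mulVec, dotProduct] using this
    have h2 : (Mn⁻¹) *ᵥ (fun t' => (g t' : Fin sN → ℂ) p) = 0 := funext hqs
    have h3 : (fun t' => (g t' : Fin sN → ℂ) p) = 0 := by
      have := congrArg (fun w => Mn *ᵥ w) h2
      simpa [Matrix.mulVec_mulVec, Matrix.mul_nonsing_inv Mn hMn] using this
    exact congrFun h3 t
  let Φ : (Fin nN → W) →ₗ[ℂ] (LinearMap.ker (A ⊗ₖ Mn).mulVecLin) :=
    Φ₀.codRestrict _ hmem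
  have hinj' : Function.Injective Φ := fun x y hxy =>
    hinj (by simpa [Φ, LinearMap.codRestrict] using congrArg Subtype.val hxy)
  have hle := LinearMap.finrank_le_finrank_of_injective hinj'
  have hdom : Module.finrank ℂ (Fin nN → W) = nN * Module.finrank ℂ W := by
    rw [Module.finrank_pi_fintype]
    simp [Finset.sum_const, mul_comm]
  rwa [hdom] at hle

lemma sub_kron {a b : ℕ} (A B : Matrix (Fin a) (Fin a) ℝ) (C : Matrix (Fin b) (Fin b) ℝ) :
    (A - B) ⊗ₖ C = A ⊗ₖ C - B ⊗ₖ C := by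
  ext ⟨i, j⟩ ⟨p, q⟩
  simp [Matrix.kroneckerMap_apply, sub_mul]

lemma ker_toLin'_eq {m : Type*} [Fintype m] [DecidableEq m] (X : Matrix m m ℂ) :
    LinearMap.ker (Matrix.toLin' X) = LinearMap.ker X.mulVecLin := by
  ext v
  simp [LinearMap.mem_ker, Matrix.toLin'_apply, Matrix.mulVecLin_apply]

theorem stmt_1 {s n : ℕ} (hs : 0 < s) (hn : 0 < n)
    (U V : Matrix (Fin s) (Fin s) ℝ) (hU : Uᵀ * U = 1) (hV : Vᵀ * V = 1)
    (d : Fin s → ℝ) (hd : ∀ i, 0 < d i)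
    (M K : Matrix (Fin n) (Fin n) ℝ) (hM : M.PosDef) (hK : K.PosSemidef)
    (τ : ℝ) (hτ : 0 < τ)
    (hray : ∀ y : Fin s → ℂ, y ≠ 0 →
      0 < ((star y ⬝ᵥ ((Uᵀ * V).map Complex.ofReal) *ᵥ y) / (star y ⬝ᵥ y)).re)
    (Θ P_RK : Matrix (Fin s × Fin n) (Fin s × Fin n) ℝ)
    (hΘ : Θ = (1 : Matrix (Fin s) (Fin s) ℝ) ⊗ₖ M +
        τ • ((U * Matrix.diagonal d * Vᵀ) ⊗ₖ K))
    (hP : P_RK = (U ⊗ₖ (1 : Matrix (Fin n) (Fin n) ℝ)) *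
        ((1 : Matrix (Fin s) (Fin s) ℝ) ⊗ₖ M + τ • (Matrix.diagonal d ⊗ₖ K)) *
        (Vᵀ ⊗ₖ (1 : Matrix (Fin n) (Fin n) ℝ)))
    (k : ℕ) (hk : 1 ≤ k)
    (hmult : Module.finrank ℂ
      (Module.End.eigenspace
        (Matrix.toLin' ((Uᵀ * V).map Complex.ofReal)) 1) = k) :
    k * n ≤ Module.finrank ℂ
      (LinearMap.ker
        (Matrix.toLin' ((Θ.map Complex.ofReal) - (P_RK.map Complex.ofReal)))) := by
  have hUU : U * Uᵀ = 1 := mul_eq_one_comm.mp hU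
  -- Step 1 : Θ - P_RK = (1 - U * Vᵀ) ⊗ₖ M over ℝ
  have e1 : (U ⊗ₖ (1 : Matrix (Fin n) (Fin n) ℝ)) *
      ((1 : Matrix (Fin s) (Fin s) ℝ) ⊗ₖ M + τ • (Matrix.diagonal d ⊗ₖ K)) *
      (Vᵀ ⊗ₖ (1 : Matrix (Fin n) (Fin n) ℝ))
      = (U * Vᵀ) ⊗ₖ M + τ • ((U * Matrix.diagonal d * Vᵀ) ⊗ₖ K) := by
    rw [Matrix.mul_add, Matrix.add_mul, Matrix.mul_smul, Matrix.smul_mul,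
      ← Matrix.mul_kronecker_mul, ← Matrix.mul_kronecker_mul,
      ← Matrix.mul_kronecker_mul, ← Matrix.mul_kronecker_mul]
    simp [Matrix.mul_assoc]
  have hdiff : Θ - P_RK = (1 - U * Vᵀ) ⊗ₖ M := by
    rw [hΘ, hP, e1, sub_kron]
    abel
  -- Step 2 : pass to ℂ
  have hdiffc : Θ.map Complex.ofReal - P_RK.map Complex.ofReal
      = mc (1 - U * Vᵀ) ⊗ₖ mc M := by
    have : Θ.map Complex.ofReal - P_RK.map Complex.ofReal = mc (Θ - P_RK) := (mc_sub Θ P_RK).symm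
    rw [this, hdiff, mc_kron]
  -- Step 3 : determinant units
  have hdetU : IsUnit (mc U).det := by
    refine Matrix.isUnit_det_of_right_inverse (B := mc Uᵀ) ?_
    rw [← mc_mul, hUU, mc_one]
  have hdetUt : IsUnit (mc Uᵀ).det := by
    refine Matrix.isUnit_det_of_right_inverse (B := mc U) ?_
    rw [← mc_mul, hU, mc_one]
  have hdetM : IsUnit (mc M).det := by
    have h1 : (mc M).det = (M.det : ℂ) := ((Complex.ofRealHom).map_det M).symm
    rw [h1]
    simp only [isUnit_iff_ne_zero, ne_eq, Complex.ofReal_eq_zero]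
    exact ne_of_gt hM.det_pos
  -- Step 4 : rank chain
  set E : Matrix (Fin s) (Fin s) ℂ := mc (Uᵀ * V) with hE
  have hfact : 1 - U * Vᵀ = U * (1 - Vᵀ * U) * Uᵀ := by
    rw [Matrix.mul_sub, Matrix.mul_one, Matrix.sub_mul, hUU]
    congr 1
    rw [Matrix.mul_assoc U (Vᵀ * U) Uᵀ, Matrix.mul_assoc Vᵀ U Uᵀ, hUU, Matrix.mul_one]
  have hrank : (mc (1 - U * Vᵀ)).rank = (E - 1).rank := by
    rw [hfact, mc_mul, mc_mul]
    rw [Matrix.rank_mul_eq_left_of_isUnit_det (mc Uᵀ) _ hdetUt,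
      Matrix.rank_mul_eq_right_of_isUnit_det (mc U) _ hdetU]
    have h1 : mc (1 - Vᵀ * U) = -((E - 1)ᵀ) := by
      rw [mc_sub, mc_one]
      have h2 : (E - 1)ᵀ = Eᵀ - 1 := by
        rw [Matrix.transpose_sub, Matrix.transpose_one]
      rw [h2]
      have h3 : Eᵀ = mc (Vᵀ * U) := by
        rw [hE, ← mc_transpose, Matrix.transpose_mul, Matrix.transpose_transpose]
      rw [h3, neg_sub]
    rw [h1, rank_neg, Matrix.rank_transpose]
  -- Step 5 : nullity of (1 - U Vᵀ)ℂ equals k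
  have heig : Module.End.eigenspace (Matrix.toLin' E) 1
      = LinearMap.ker ((E - 1).mulVecLin) := by
    ext x
    rw [Module.End.mem_eigenspace_iff, LinearMap.mem_ker]
    rw [Matrix.toLin'_apply, Matrix.mulVecLin_apply, Matrix.sub_mulVec, Matrix.one_mulVec,
      sub_eq_zero, one_smul]
  have hnull : Module.finrank ℂ (LinearMap.ker (mc (1 - U * Vᵀ)).mulVecLin) = k := by
    rw [nullity_eq_of_rank_eq _ _ hrank, ← heig]
    exact hmult
  -- Step 6 : conclude
  rw [hdiffc, ker_toLin'_eq, mul_comm k n]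
  calc n * k = n * Module.finrank ℂ (LinearMap.ker (mc (1 - U * Vᵀ)).mulVecLin) := by rw [hnull]
    _ ≤ _ := ker_kron_ge _ _ hdetM
end

section
/- Let A be an invertible real s×s matrix and suppose A = U₁Σ₁V₁ᵀ and A = U₂Σ₂V₂ᵀ are two singular value decompositions of A, where U₁, V₁, U₂, V₂ are real orthogonal s×s matrices and Σ₁, Σ₂ are diagonal s×s matrices with nonnegative diagonal entries. Then the matrices U₁ᵀV₁ and U₂ᵀV₂ are orthogonally similar: the matrix Q := V₁ᵀV₂ is real orthogonal and U₂ᵀV₂ = Qᵀ(U₁ᵀV₁)Q. In particular, U₁ᵀV₁ and U₂ᵀV₂ have the same eigenvalues, so the field of values of UᵀV arising from a singular value decomposition of an invertible matrix A is uniquely determined by A. -/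
open Matrix

theorem stmt_2 {s : ℕ} (A : Matrix (Fin s) (Fin s) ℝ) (hA : IsUnit A)
    (U₁ V₁ U₂ V₂ : Matrix (Fin s) (Fin s) ℝ)
    (hU₁ : U₁ᵀ * U₁ = 1) (hV₁ : V₁ᵀ * V₁ = 1)
    (hU₂ : U₂ᵀ * U₂ = 1) (hV₂ : V₂ᵀ * V₂ = 1)
    (d₁ d₂ : Fin s → ℝ) (hd₁ : ∀ i, 0 ≤ d₁ i) (hd₂ : ∀ i, 0 ≤ d₂ i)
    (hSVD₁ : A = U₁ * Matrix.diagonal d₁ * V₁ᵀ)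
    (hSVD₂ : A = U₂ * Matrix.diagonal d₂ * V₂ᵀ) :
    (V₁ᵀ * V₂)ᵀ * (V₁ᵀ * V₂) = 1 ∧
      U₂ᵀ * V₂ = (V₁ᵀ * V₂)ᵀ * (U₁ᵀ * V₁) * (V₁ᵀ * V₂) := by
  have can : ∀ B : Matrix (Fin s) (Fin s) ℝ, Bᵀ * B = 1 →
      ∀ X : Matrix (Fin s) (Fin s) ℝ, Bᵀ * (B * X) = X := by
    intro B hB X; rw [← mul_assoc, hB, one_mul]
  have can' : ∀ B : Matrix (Fin s) (Fin s) ℝ, Bᵀ * B = 1 →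
      ∀ X : Matrix (Fin s) (Fin s) ℝ, B * (Bᵀ * X) = X := by
    intro B hB X; rw [← mul_assoc, mul_eq_one_comm.mp hB, one_mul]
  -- positive semidefinite polar parts
  set P₁ := V₁ * Matrix.diagonal d₁ * V₁ᵀ with hP₁def
  set P₂ := V₂ * Matrix.diagonal d₂ * V₂ᵀ with hP₂def
  have hpsd : ∀ (V : Matrix (Fin s) (Fin s) ℝ) (d : Fin s → ℝ), (∀ i, 0 ≤ d i) →
      (V * Matrix.diagonal d * Vᵀ).PosSemidef := by
    intro V d hd
    have := (Matrix.posSemidef_diagonal_iff.mpr hd).mul_mul_conjTranspose_same V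
    rwa [conjTranspose_eq_transpose_of_trivial] at this
  have hpsd₁ : P₁.PosSemidef := hpsd V₁ d₁ hd₁
  have hpsd₂ : P₂.PosSemidef := hpsd V₂ d₂ hd₂
  -- their squares both equal AᵀA
  have hsq : P₁ ^ 2 = P₂ ^ 2 := by
    have h1 : P₁ ^ 2 = Aᵀ * A := by
      rw [hSVD₁, hP₁def, pow_two]
      simp only [Matrix.transpose_mul, Matrix.transpose_transpose, diagonal_transpose, mul_assoc]
      rw [can V₁ hV₁, can U₁ hU₁]
    have h2 : P₂ ^ 2 = Aᵀ * A := by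
      rw [hSVD₂, hP₂def, pow_two]
      simp only [Matrix.transpose_mul, Matrix.transpose_transpose, diagonal_transpose, mul_assoc]
      rw [can V₂ hV₂, can U₂ hU₂]
    rw [h1, h2]
  have hP : P₁ = P₂ := by
    open scoped MatrixOrder Matrix.Norms.L2Operator in
    exact (CFC.sq_eq_sq_iff P₁ P₂ hpsd₁.nonneg hpsd₂.nonneg).mp hsq
  -- P₁ is a unit
  have hP₁A : P₁ = V₁ * U₁ᵀ * A := by
    rw [hSVD₁, hP₁def]
    simp only [mul_assoc]
    rw [can U₁ hU₁]
  have hVU : IsUnit (V₁ * U₁ᵀ) := by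
    refine ⟨⟨V₁ * U₁ᵀ, U₁ * V₁ᵀ, ?_, ?_⟩, rfl⟩
    · simp only [mul_assoc]
      rw [can U₁ hU₁, mul_eq_one_comm.mp hV₁]
    · simp only [mul_assoc]
      rw [can V₁ hV₁, mul_eq_one_comm.mp hU₁]
  have hPunit : IsUnit P₁ := hP₁A ▸ hVU.mul hA
  -- polar decompositions
  have hpolar : U₁ * V₁ᵀ * P₁ = U₂ * V₂ᵀ * P₂ := by
    rw [hP₁def, hP₂def]
    simp only [mul_assoc]
    rw [can V₁ hV₁, can V₂ hV₂, ← mul_assoc, ← mul_assoc, ← hSVD₁, ← hSVD₂]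
  rw [← hP] at hpolar
  have hW : U₁ * V₁ᵀ = U₂ * V₂ᵀ := hPunit.mul_right_cancel hpolar
  have hWt : V₁ * U₁ᵀ = V₂ * U₂ᵀ := by
    have := congrArg Matrix.transpose hW
    simpa using this
  constructor
  · simp only [Matrix.transpose_mul, Matrix.transpose_transpose, mul_assoc]
    rw [can' V₁ hV₁, hV₂]
  · simp only [Matrix.transpose_mul, Matrix.transpose_transpose, mul_assoc]
    rw [can' V₁ hV₁, ← mul_assoc V₁, hWt, mul_assoc V₂, can V₂ hV₂]
end

section
/- Let U and V be real orthogonal s×s matrices, Σ any real s×s matrix, M and K real n×n matrices, and τ a real number; set A := UΣVᵀ, Θ := Iₛ⊗M + τ A⊗K, and P_RK := (U⊗Iₙ)(Iₛ⊗M + τΣ⊗K)(Vᵀ⊗Iₙ). Then for every λ ∈ ℂ the following are equivalent (all matrices embedded into ℂ): (i) there exists a nonzero x ∈ ℂ^{s·n} with Θx = λ P_RK x; (ii) there exists a nonzero y ∈ ℂ^{s·n} with ((UᵀV)⊗M + τΣ⊗K)y = λ(Iₛ⊗M + τΣ⊗K)y. Moreover the correspondence between eigenvectors is given by y = (Vᵀ⊗Iₙ)x.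 -/
open Matrix Kronecker

theorem stmt_8 {s n : ℕ}
    (U V Sig : Matrix (Fin s) (Fin s) ℝ) (hU : Uᵀ * U = 1) (hV : Vᵀ * V = 1)
    (M K : Matrix (Fin n) (Fin n) ℝ) (τ : ℝ)
    (A Θ P_RK : Matrix _ _ ℝ)
    (hA : A = U * Sig * Vᵀ)
    (hΘ : Θ = (1 : Matrix (Fin s) (Fin s) ℝ) ⊗ₖ M + τ • (A ⊗ₖ K))
    (hP : P_RK = (U ⊗ₖ (1 : Matrix (Fin n) (Fin n) ℝ)) *
        ((1 : Matrix (Fin s) (Fin s) ℝ) ⊗ₖ M + τ • (Sig ⊗ₖ K)) *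
        (Vᵀ ⊗ₖ (1 : Matrix (Fin n) (Fin n) ℝ)))
    (lam : ℂ) :
    ((∃ x : Fin s × Fin n → ℂ, x ≠ 0 ∧
        (Θ.map Complex.ofReal) *ᵥ x = lam • ((P_RK.map Complex.ofReal) *ᵥ x)) ↔
      (∃ y : Fin s × Fin n → ℂ, y ≠ 0 ∧
        (((Uᵀ * V) ⊗ₖ M + τ • (Sig ⊗ₖ K)).map Complex.ofReal) *ᵥ y =
          lam • ((((1 : Matrix (Fin s) (Fin s) ℝ) ⊗ₖ M + τ • (Sig ⊗ₖ K)).map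
            Complex.ofReal) *ᵥ y))) ∧
    (∀ x : Fin s × Fin n → ℂ, x ≠ 0 →
      (Θ.map Complex.ofReal) *ᵥ x = lam • ((P_RK.map Complex.ofReal) *ᵥ x) →
      (((Vᵀ ⊗ₖ (1 : Matrix (Fin n) (Fin n) ℝ)).map Complex.ofReal) *ᵥ x) ≠ 0 ∧
        (((Uᵀ * V) ⊗ₖ M + τ • (Sig ⊗ₖ K)).map Complex.ofReal) *ᵥ
            (((Vᵀ ⊗ₖ (1 : Matrix (Fin n) (Fin n) ℝ)).map Complex.ofReal) *ᵥ x) =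
          lam • ((((1 : Matrix (Fin s) (Fin s) ℝ) ⊗ₖ M + τ • (Sig ⊗ₖ K)).map
            Complex.ofReal) *ᵥ
            (((Vᵀ ⊗ₖ (1 : Matrix (Fin n) (Fin n) ℝ)).map Complex.ofReal) *ᵥ x))) := by
  have hU' : U * Uᵀ = 1 := mul_eq_one_comm.mp hU
  have hV' : V * Vᵀ = 1 := mul_eq_one_comm.mp hV
  -- real-level factorization of Θ
  have hΘ' : Θ = (U ⊗ₖ (1 : Matrix (Fin n) (Fin n) ℝ)) *
      ((Uᵀ * V) ⊗ₖ M + τ • (Sig ⊗ₖ K)) * (Vᵀ ⊗ₖ (1 : Matrix (Fin n) (Fin n) ℝ)) := by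
    rw [hΘ, hA, Matrix.mul_add, Matrix.add_mul]
    congr 1
    · rw [← Matrix.mul_kronecker_mul, ← Matrix.mul_kronecker_mul, Matrix.one_mul,
        Matrix.mul_one]
      rw [← Matrix.mul_assoc, hU', Matrix.one_mul, hV']
    · rw [Matrix.mul_smul, Matrix.smul_mul, ← Matrix.mul_kronecker_mul,
        ← Matrix.mul_kronecker_mul, Matrix.one_mul, Matrix.mul_one]
  -- complex matrices
  set c : ℝ →+* ℂ := Complex.ofRealHom with hc
  have hmap : ∀ (X Y : Matrix (Fin s × Fin n) (Fin s × Fin n) ℝ),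
      (X * Y).map Complex.ofReal = X.map Complex.ofReal * Y.map Complex.ofReal := by
    intro X Y
    exact Matrix.map_mul (f := c)
  set Wu : Matrix (Fin s × Fin n) (Fin s × Fin n) ℂ :=
    (U ⊗ₖ (1 : Matrix (Fin n) (Fin n) ℝ)).map Complex.ofReal with hWu
  set Wu' : Matrix (Fin s × Fin n) (Fin s × Fin n) ℂ :=
    (Uᵀ ⊗ₖ (1 : Matrix (Fin n) (Fin n) ℝ)).map Complex.ofReal with hWu'
  set Wv : Matrix (Fin s × Fin n) (Fin s × Fin n) ℂ :=
    (Vᵀ ⊗ₖ (1 : Matrix (Fin n) (Fin n) ℝ)).map Complex.ofReal with hWv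
  set Wv' : Matrix (Fin s × Fin n) (Fin s × Fin n) ℂ :=
    (V ⊗ₖ (1 : Matrix (Fin n) (Fin n) ℝ)).map Complex.ofReal with hWv'
  have hmap1 : (1 : Matrix (Fin s × Fin n) (Fin s × Fin n) ℝ).map Complex.ofReal = 1 :=
    Matrix.map_one _ (map_zero c) (map_one c)
  have hWuWu' : Wu' * Wu = 1 := by
    rw [hWu, hWu', ← hmap, ← Matrix.mul_kronecker_mul, hU, Matrix.one_mul,
      Matrix.one_kronecker_one, hmap1]
  have hWvWv' : Wv' * Wv = 1 := by
    rw [hWv, hWv', ← hmap, ← Matrix.mul_kronecker_mul, Matrix.mul_one, hV', Matrix.one_kronecker_one, hmap1]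
  have hWv'Wv : Wv * Wv' = 1 := mul_eq_one_comm.mp hWvWv'
  set B : Matrix (Fin s × Fin n) (Fin s × Fin n) ℂ :=
    ((Uᵀ * V) ⊗ₖ M + τ • (Sig ⊗ₖ K)).map Complex.ofReal with hB
  set C : Matrix (Fin s × Fin n) (Fin s × Fin n) ℂ :=
    (((1 : Matrix (Fin s) (Fin s) ℝ)) ⊗ₖ M + τ • (Sig ⊗ₖ K)).map Complex.ofReal with hC
  have hΘc : Θ.map Complex.ofReal = Wu * B * Wv := by
    rw [hΘ', hmap, hmap]
  have hPc : P_RK.map Complex.ofReal = Wu * C * Wv := by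
    rw [hP, hmap, hmap]
  -- injectivity of Wu
  have hWuinj : ∀ a b : Fin s × Fin n → ℂ, Wu *ᵥ a = Wu *ᵥ b → a = b := by
    intro a b h
    have := congrArg (Wu' *ᵥ ·) h
    simpa [Matrix.mulVec_mulVec, hWuWu'] using this
  have key : ∀ x : Fin s × Fin n → ℂ,
      ((Θ.map Complex.ofReal) *ᵥ x = lam • ((P_RK.map Complex.ofReal) *ᵥ x)) ↔
      (B *ᵥ (Wv *ᵥ x) = lam • (C *ᵥ (Wv *ᵥ x))) := by
    intro x
    rw [hΘc, hPc]
    have e1 : (Wu * B * Wv) *ᵥ x = Wu *ᵥ (B *ᵥ (Wv *ᵥ x)) := by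
      simp [Matrix.mulVec_mulVec, Matrix.mul_assoc]
    have e2 : (Wu * C * Wv) *ᵥ x = Wu *ᵥ (C *ᵥ (Wv *ᵥ x)) := by
      simp [Matrix.mulVec_mulVec, Matrix.mul_assoc]
    rw [e1, e2, ← Matrix.mulVec_smul]
    exact ⟨hWuinj _ _, fun h => by rw [h]⟩
  have hWvne : ∀ x : Fin s × Fin n → ℂ, x ≠ 0 → Wv *ᵥ x ≠ 0 := by
    intro x hx h0
    apply hx
    have := congrArg (Wv' *ᵥ ·) h0
    simpa [Matrix.mulVec_mulVec, hWvWv'] using this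
  constructor
  · constructor
    · rintro ⟨x, hx, hxe⟩
      exact ⟨Wv *ᵥ x, hWvne x hx, (key x).mp hxe⟩
    · rintro ⟨y, hy, hye⟩
      refine ⟨Wv' *ᵥ y, ?_, ?_⟩
      · intro h0
        apply hy
        have := congrArg (Wv *ᵥ ·) h0
        simpa [Matrix.mulVec_mulVec, hWv'Wv] using this
      · rw [key]
        have e : Wv *ᵥ (Wv' *ᵥ y) = y := by
          rw [Matrix.mulVec_mulVec, hWv'Wv, Matrix.one_mulVec]
        rw [e]
        exact hye
  · intro x hx hxe
    exact ⟨hWvne x hx, (key x).mp hxe⟩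
end

section
/- Let Φ be an m×m matrix, Ψ₁ an m×n matrix, Ψ₂ an n×m matrix, and Θ an invertible n×n matrix over a field, and suppose the Schur complement S := Φ − Ψ₁Θ⁻¹Ψ₂ is invertible. Let A be the block matrix with blocks [[Φ, Ψ₁],[Ψ₂, Θ]] and let P be the block upper-triangular preconditioner with blocks [[S, Ψ₁],[0, Θ]]. Then (P⁻¹A − I)² = 0. Consequently the spectrum of the preconditioned matrix P⁻¹A is exactly {1} and its minimal polynomial divides (X − 1)², i.e., has degree at most 2. -/
open Matrix

theorem stmt_9 {m n : ℕ} (hmn : 0 < m + n) {F : Type*} [Field F]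
    (Φ : Matrix (Fin m) (Fin m) F) (Ψ₁ : Matrix (Fin m) (Fin n) F)
    (Ψ₂ : Matrix (Fin n) (Fin m) F) (Θ : Matrix (Fin n) (Fin n) F)
    (hΘ : IsUnit Θ.det)
    (hS : IsUnit (Φ - Ψ₁ * Θ⁻¹ * Ψ₂).det) :
    ((Matrix.fromBlocks (Φ - Ψ₁ * Θ⁻¹ * Ψ₂) Ψ₁ 0 Θ)⁻¹ *
        (Matrix.fromBlocks Φ Ψ₁ Ψ₂ Θ) - 1) ^ 2 = 0 ∧
      spectrum F ((Matrix.fromBlocks (Φ - Ψ₁ * Θ⁻¹ * Ψ₂) Ψ₁ 0 Θ)⁻¹ *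
        (Matrix.fromBlocks Φ Ψ₁ Ψ₂ Θ)) = {1} := by
  set S := Φ - Ψ₁ * Θ⁻¹ * Ψ₂ with hSdef
  have hS' : IsUnit S := (Matrix.isUnit_iff_isUnit_det _).mpr hS
  have hΘ' : IsUnit Θ := (Matrix.isUnit_iff_isUnit_det _).mpr hΘ
  have hPinv : (Matrix.fromBlocks S Ψ₁ 0 Θ)⁻¹ =
      Matrix.fromBlocks S⁻¹ (-(S⁻¹ * Ψ₁ * Θ⁻¹)) 0 Θ⁻¹ :=
    Matrix.inv_fromBlocks_zero₂₁_of_isUnit_iff _ _ _ (by simp [hS', hΘ'])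
  have hM : (Matrix.fromBlocks S Ψ₁ 0 Θ)⁻¹ * (Matrix.fromBlocks Φ Ψ₁ Ψ₂ Θ) =
      1 + Matrix.fromBlocks 0 0 (Θ⁻¹ * Ψ₂) 0 := by
    rw [hPinv, Matrix.fromBlocks_multiply]
    have h1 : S⁻¹ * Φ + -(S⁻¹ * Ψ₁ * Θ⁻¹) * Ψ₂ = 1 := by
      rw [Matrix.neg_mul, ← sub_eq_add_neg]
      have e : S⁻¹ * Ψ₁ * Θ⁻¹ * Ψ₂ = S⁻¹ * (Ψ₁ * Θ⁻¹ * Ψ₂) := by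
        simp only [Matrix.mul_assoc]
      rw [e, ← Matrix.mul_sub, ← hSdef, Matrix.nonsing_inv_mul _ hS]
    have h2 : S⁻¹ * Ψ₁ + -(S⁻¹ * Ψ₁ * Θ⁻¹) * Θ = 0 := by
      rw [Matrix.neg_mul, Matrix.mul_assoc (S⁻¹ * Ψ₁), Matrix.nonsing_inv_mul _ hΘ,
        Matrix.mul_one, add_neg_cancel]
    rw [h1, h2, Matrix.zero_mul, Matrix.zero_mul, zero_add, Matrix.nonsing_inv_mul _ hΘ,
      ← Matrix.fromBlocks_one, Matrix.fromBlocks_add]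
    congr 1 <;> simp
  rw [hM]
  have hN2 : (Matrix.fromBlocks 0 0 (Θ⁻¹ * Ψ₂) 0 : Matrix (Fin m ⊕ Fin n) (Fin m ⊕ Fin n) F) *
      Matrix.fromBlocks 0 0 (Θ⁻¹ * Ψ₂) 0 = 0 := by
    rw [Matrix.fromBlocks_multiply]
    simp
  have hnil : IsNilpotent (Matrix.fromBlocks 0 0 (Θ⁻¹ * Ψ₂) 0 :
      Matrix (Fin m ⊕ Fin n) (Fin m ⊕ Fin n) F) := ⟨2, by rw [sq, hN2]⟩
  haveI : Nonempty (Fin m ⊕ Fin n) := by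
    rcases Nat.lt_or_ge 0 m with hm | hm
    · exact ⟨Sum.inl ⟨0, hm⟩⟩
    · exact ⟨Sum.inr ⟨0, by omega⟩⟩
  constructor
  · rw [add_sub_cancel_left, sq, hN2]
  · ext μ
    rw [spectrum.mem_iff, Set.mem_singleton_iff]
    constructor
    · intro h
      by_contra hμ
      apply h
      have : (algebraMap F (Matrix (Fin m ⊕ Fin n) (Fin m ⊕ Fin n) F)) μ -
          (1 + Matrix.fromBlocks 0 0 (Θ⁻¹ * Ψ₂) 0) =
          (algebraMap F (Matrix (Fin m ⊕ Fin n) (Fin m ⊕ Fin n) F)) (μ - 1) +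
          -(Matrix.fromBlocks 0 0 (Θ⁻¹ * Ψ₂) 0) := by
        rw [map_sub, _root_.map_one]; abel
      rw [this]
      exact IsNilpotent.isUnit_add_left_of_commute hnil.neg
        ((algebraMap F _).isUnit_map (isUnit_iff_ne_zero.mpr (sub_ne_zero.mpr hμ)))
        (Commute.neg_left (Algebra.commutes _ _).symm)
    · rintro rfl h
      rw [_root_.map_one, sub_add_cancel_left] at h
      exact hnil.neg.not_isUnit h
end

section
/- Let U and V be real orthogonal s×s matrices, M a symmetric positive definite real n×n matrix, K a symmetric positive semidefinite real n×n matrix, Σ a symmetric positive semidefinite real s×s matrix, and τ > 0. Then the SVD-based preconditioner P_RK := (U⊗Iₙ)(Iₛ⊗M + τΣ⊗K)(Vᵀ⊗Iₙ) is invertible. -/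
open Matrix Kronecker

lemma real_transpose_eq_self_of_herm {n : ℕ} {A : Matrix (Fin n) (Fin n) ℝ}
    (hA : A.IsHermitian) : Aᵀ = A := by
  rw [← conjTranspose_eq_transpose_of_trivial]; exact hA

lemma kron_posSemidef {s n : ℕ} {A : Matrix (Fin s) (Fin s) ℝ}
    {B : Matrix (Fin n) (Fin n) ℝ} (hA : A.PosSemidef) (hB : B.PosSemidef) :
    (A ⊗ₖ B).PosSemidef := by
  exact hA.kronecker hB

lemma one_kron_posDef {s n : ℕ} {M : Matrix (Fin n) (Fin n) ℝ} (hM : M.PosDef) :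
    ((1 : Matrix (Fin s) (Fin s) ℝ) ⊗ₖ M).PosDef := by
  refine PosDef.of_dotProduct_mulVec_pos (kron_posSemidef (PosSemidef.one) hM.posSemidef).1 fun x hx => ?_
  have hmv : ∀ p : Fin s × Fin n,
      (((1 : Matrix (Fin s) (Fin s) ℝ) ⊗ₖ M) *ᵥ x) p
        = (M *ᵥ fun k => x (p.1, k)) p.2 := by
    intro p
    simp only [mulVec, dotProduct, Fintype.sum_prod_type, kroneckerMap_apply,
      one_apply]
    rw [Finset.sum_eq_single p.1]
    · simp
    · intro b _ hb
      simp [Ne.symm hb]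
    · simp
  have key : star x ⬝ᵥ (((1 : Matrix (Fin s) (Fin s) ℝ) ⊗ₖ M) *ᵥ x)
      = ∑ i : Fin s, (star fun k => x (i, k)) ⬝ᵥ (M *ᵥ fun k => x (i, k)) := by
    simp only [dotProduct, Fintype.sum_prod_type, Pi.star_apply]
    refine Finset.sum_congr rfl fun i _ => Finset.sum_congr rfl fun k _ => ?_
    rw [hmv (i, k)]
  rw [key]
  obtain ⟨⟨i0, k0⟩, hp⟩ := Function.ne_iff.mp hx
  refine Finset.sum_pos' (fun i _ => hM.posSemidef.dotProduct_mulVec_nonneg _) ⟨i0, Finset.mem_univ _, ?_⟩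
  exact hM.dotProduct_mulVec_pos (fun h => hp (congrFun h k0))

theorem stmt_11 {s n : ℕ}
    (U V : Matrix (Fin s) (Fin s) ℝ) (hU : Uᵀ * U = 1) (hV : Vᵀ * V = 1)
    (M K : Matrix (Fin n) (Fin n) ℝ) (hM : M.PosDef) (hK : K.PosSemidef)
    (Sig : Matrix (Fin s) (Fin s) ℝ) (hSig : Sig.PosSemidef)
    (τ : ℝ) (hτ : 0 < τ) :
    IsUnit ((U ⊗ₖ (1 : Matrix (Fin n) (Fin n) ℝ)) *
      ((1 : Matrix (Fin s) (Fin s) ℝ) ⊗ₖ M + τ • (Sig ⊗ₖ K)) *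
      (Vᵀ ⊗ₖ (1 : Matrix (Fin n) (Fin n) ℝ))) := by
  have hUunit : IsUnit U := by
    have : IsUnit U.det := by
      have := congrArg Matrix.det hU
      rw [det_mul, det_transpose, det_one] at this
      exact IsUnit.of_mul_eq_one _ this
    exact (isUnit_iff_isUnit_det _).2 this
  have hVunit : IsUnit Vᵀ := by
    have : IsUnit Vᵀ.det := by
      have := congrArg Matrix.det hV
      rw [det_mul, det_transpose, det_one] at this
      rw [det_transpose]
      exact IsUnit.of_mul_eq_one _ (by rw [mul_comm] at this; exact this)
    exact (isUnit_iff_isUnit_det _).2 this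
  have hkronU : IsUnit (U ⊗ₖ (1 : Matrix (Fin n) (Fin n) ℝ)) := by
    rw [isUnit_iff_isUnit_det, det_kronecker, det_one, one_pow, mul_one]
    exact ((isUnit_iff_isUnit_det U).1 hUunit).pow _
  have hkronV : IsUnit (Vᵀ ⊗ₖ (1 : Matrix (Fin n) (Fin n) ℝ)) := by
    rw [isUnit_iff_isUnit_det, det_kronecker, det_one, one_pow, mul_one]
    exact ((isUnit_iff_isUnit_det Vᵀ).1 hVunit).pow _
  have hmid : IsUnit ((1 : Matrix (Fin s) (Fin s) ℝ) ⊗ₖ M + τ • (Sig ⊗ₖ K)) := by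
    have hKpsd : (Sig ⊗ₖ K).PosSemidef := kron_posSemidef hSig hK
    have hsmul : (τ • (Sig ⊗ₖ K)).PosSemidef := by
      refine PosSemidef.of_dotProduct_mulVec_nonneg ?_ fun x => ?_
      · unfold Matrix.IsHermitian
        rw [conjTranspose_smul, hKpsd.1]
        simp
      · rw [smul_mulVec, dotProduct_smul, smul_eq_mul]
        exact mul_nonneg hτ.le (hKpsd.dotProduct_mulVec_nonneg x)
    exact ((one_kron_posDef hM).add_posSemidef hsmul).isUnit
  exact (hkronU.mul hmid).mul hkronV
end

section
/- Let A_RK = UΣVᵀ be a singular value decomposition of a real s×s matrix (U, V real orthogonal, Σ diagonal with positive diagonal entries), let M be a symmetric positive definite real n×n matrix, K a symmetric positive semidefinite real n×n matrix, and τ > 0. Assume that for every nonzero complex vector y ∈ ℂˢ the real part of the Rayleigh quotient y*(UᵀV)y/(y*y) is positive. Then the Runge–Kutta stage matrix Θ := Iₛ⊗M + τ A_RK⊗K is invertible. -/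
open Matrix Kronecker

private lemma aux_isUnit {m : Type*} [Fintype m] [DecidableEq m]
    (A : Matrix m m ℝ) (h : ∀ x : m → ℝ, x ≠ 0 → 0 < x ⬝ᵥ (A *ᵥ x)) : IsUnit A := by
  rw [Matrix.isUnit_iff_isUnit_det, isUnit_iff_ne_zero]
  intro hdet
  obtain ⟨v, hv, hAv⟩ := (Matrix.exists_mulVec_eq_zero_iff).mpr hdet
  have := h v hv
  rw [hAv, dotProduct_zero] at this
  exact lt_irrefl _ this

private lemma real_rayleigh {s : ℕ} (W : Matrix (Fin s) (Fin s) ℝ)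
    (hray : ∀ y : Fin s → ℂ, y ≠ 0 →
      0 < ((star y ⬝ᵥ (W.map Complex.ofReal) *ᵥ y) / (star y ⬝ᵥ y)).re) :
    ∀ y : Fin s → ℝ, y ≠ 0 → 0 < y ⬝ᵥ (W *ᵥ y) := by
  intro y hy
  set yc : Fin s → ℂ := fun i => (y i : ℂ) with hyc
  have hycne : yc ≠ 0 := by
    intro h
    apply hy
    funext i
    have := congrFun h i
    simpa [yc] using this
  have hnum : star yc ⬝ᵥ ((W.map Complex.ofReal) *ᵥ yc) = ((y ⬝ᵥ (W *ᵥ y) : ℝ) : ℂ) := by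
    simp [dotProduct, mulVec, yc, Matrix.map_apply, Finset.mul_sum]
  have hden : star yc ⬝ᵥ yc = ((y ⬝ᵥ y : ℝ) : ℂ) := by
    simp [dotProduct, yc]
  have h := hray yc hycne
  rw [hnum, hden, ← Complex.ofReal_div, Complex.ofReal_re] at h
  have hden_pos : 0 < y ⬝ᵥ y := by
    have : y ⬝ᵥ y ≠ 0 := by simpa using (dotProduct_self_eq_zero (v := y)).not.mpr hy
    have h0 : 0 ≤ y ⬝ᵥ y := by
      simp [dotProduct]
      exact Finset.sum_nonneg fun i _ => mul_self_nonneg _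
    exact lt_of_le_of_ne h0 (Ne.symm this)
  rcases div_pos_iff.mp h with ⟨h1, _⟩ | ⟨_, h2⟩
  · exact h1
  · linarith

private lemma sum_rot {α β γ : Type*} [Fintype α] [Fintype β] [Fintype γ] (f : α → β → γ → ℝ) :
    ∑ i, ∑ j, ∑ k, f i j k = ∑ k, ∑ i, ∑ j, f i j k := by
  have h1 : ∀ i : α, ∑ j, ∑ k, f i j k = ∑ k, ∑ j, f i j k := fun i => Finset.sum_comm
  simp_rw [h1]
  exact Finset.sum_comm

private lemma dot_kron {s n : ℕ} (A : Matrix (Fin s) (Fin s) ℝ) (B : Matrix (Fin n) (Fin n) ℝ)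
    (x : Fin s × Fin n → ℝ) :
    x ⬝ᵥ ((A ⊗ₖ B) *ᵥ x) =
      ∑ a, ∑ b, A a b * ((fun i => x (a, i)) ⬝ᵥ (B *ᵥ fun j => x (b, j))) := by
  simp only [dotProduct, mulVec, kroneckerMap_apply, Fintype.sum_prod_type, Finset.mul_sum,
    Finset.sum_mul]
  refine Finset.sum_congr rfl fun a _ => ?_
  rw [Finset.sum_comm]
  refine Finset.sum_congr rfl fun b _ => ?_
  exact Finset.sum_congr rfl fun i _ => Finset.sum_congr rfl fun j _ => by ring

private lemma quad_pos {s n : ℕ} (C : Matrix (Fin s) (Fin s) ℝ)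
    (hC : ∀ y : Fin s → ℝ, y ≠ 0 → 0 < y ⬝ᵥ (C *ᵥ y))
    (M K : Matrix (Fin n) (Fin n) ℝ) (hM : M.PosDef) (hK : K.PosSemidef)
    (τ : ℝ) (hτ : 0 < τ) (x : Fin s × Fin n → ℝ) (hx : x ≠ 0) :
    0 < x ⬝ᵥ ((C ⊗ₖ M + τ • ((1 : Matrix (Fin s) (Fin s) ℝ) ⊗ₖ K)) *ᵥ x) := by
  have hCnn : ∀ y : Fin s → ℝ, 0 ≤ y ⬝ᵥ (C *ᵥ y) := by
    intro y
    by_cases hy : y = 0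
    · simp [hy]
    · exact (hC y hy).le
  rw [add_mulVec, dotProduct_add, smul_mulVec, dotProduct_smul]
  have hterm2 : 0 ≤ x ⬝ᵥ (((1 : Matrix (Fin s) (Fin s) ℝ) ⊗ₖ K) *ᵥ x) := by
    rw [dot_kron]
    refine Finset.sum_nonneg fun a _ => Finset.sum_nonneg fun b _ => ?_
    rcases eq_or_ne a b with rfl | hab
    · simp only [Matrix.one_apply_eq, one_mul]
      simpa using hK.re_dotProduct_nonneg (fun i => x (a, i))
    · simp [Matrix.one_apply_ne hab]
  open scoped MatrixOrder in set S := CFC.sqrt M with hSdef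
  have hSS : S * S = M := by
    open scoped MatrixOrder in exact CFC.sqrt_mul_sqrt_self M hM.posSemidef.nonneg
  have hSherm : S.IsHermitian := by
    open scoped MatrixOrder in exact (CFC.sqrt_nonneg M).posSemidef.1
  have hM' : ∀ i j, M i j = ∑ k, S k i * S k j := by
    intro i j
    rw [← hSS]
    simp only [Matrix.mul_apply]
    refine Finset.sum_congr rfl fun k _ => ?_
    have h2 : S i k = S k i := by
      have := hSherm.apply k i
      simpa using this
    rw [h2]
  set y : Fin n → Fin s → ℝ := fun k a => ∑ i, S k i * x (a, i) with hy
  have hblock : ∀ a b : Fin s,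
      ((fun i => x (a, i)) ⬝ᵥ (M *ᵥ fun j => x (b, j))) = ∑ k, y k a * y k b := by
    intro a b
    have hrhs : ∑ k, y k a * y k b
        = ∑ k, ∑ i, ∑ j, (S k i * x (a, i)) * (S k j * x (b, j)) :=
      Finset.sum_congr rfl fun k _ => Finset.sum_mul_sum _ _ _ _
    rw [hrhs, ← sum_rot]
    simp only [dotProduct, mulVec, hM', Finset.sum_mul, Finset.mul_sum]
    refine Finset.sum_congr rfl fun i _ => Finset.sum_congr rfl fun j _ =>
      Finset.sum_congr rfl fun k _ => by ring
  have key : x ⬝ᵥ ((C ⊗ₖ M) *ᵥ x) = ∑ k, (y k) ⬝ᵥ (C *ᵥ (y k)) := by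
    rw [dot_kron]
    simp_rw [hblock, Finset.mul_sum]
    rw [sum_rot]
    simp only [dotProduct, mulVec, Finset.mul_sum]
    refine Finset.sum_congr rfl fun k _ => Finset.sum_congr rfl fun a _ =>
      Finset.sum_congr rfl fun b _ => by ring
  have hex : ∃ k, y k ≠ 0 := by
    by_contra h
    push_neg at h
    apply hx
    funext p
    obtain ⟨a, i⟩ := p
    have hxa : ∀ a : Fin s, (fun i => x (a, i)) = 0 := by
      intro a
      by_contra hxa
      have hMv : M *ᵥ (fun i => x (a, i)) = 0 := by
        rw [← hSS, ← Matrix.mulVec_mulVec]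
        have : S *ᵥ (fun i => x (a, i)) = 0 := by
          funext k
          have := congrFun (h k) a
          simpa [hy, mulVec, dotProduct] using this
        rw [this, Matrix.mulVec_zero]
      have hpos := hM.re_dotProduct_pos (x := fun i => x (a, i)) (by simpa using hxa)
      rw [show (star (fun i => x (a, i)) ⬝ᵥ M *ᵥ fun i => x (a, i)) = 0 by
        rw [hMv]; simp] at hpos
      simp at hpos
    exact congrFun (hxa a) i
  have hterm1 : 0 < x ⬝ᵥ ((C ⊗ₖ M) *ᵥ x) := by
    rw [key]
    obtain ⟨k0, hk0⟩ := hex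
    exact Finset.sum_pos' (fun k _ => hCnn (y k)) ⟨k0, Finset.mem_univ _, hC _ hk0⟩
  rw [smul_eq_mul]
  nlinarith

theorem stmt_12 {s n : ℕ}
    (U V : Matrix (Fin s) (Fin s) ℝ) (hU : Uᵀ * U = 1) (hV : Vᵀ * V = 1)
    (d : Fin s → ℝ) (hd : ∀ i, 0 < d i)
    (M K : Matrix (Fin n) (Fin n) ℝ) (hM : M.PosDef) (hK : K.PosSemidef)
    (τ : ℝ) (hτ : 0 < τ)
    (hray : ∀ y : Fin s → ℂ, y ≠ 0 →
      0 < ((star y ⬝ᵥ ((Uᵀ * V).map Complex.ofReal) *ᵥ y) / (star y ⬝ᵥ y)).re) :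
    IsUnit ((1 : Matrix (Fin s) (Fin s) ℝ) ⊗ₖ M +
      τ • ((U * Matrix.diagonal d * Vᵀ) ⊗ₖ K)) := by
  set e : Fin s → ℝ := fun i => Real.sqrt (d i) with he_def
  have he : ∀ i, 0 < e i := fun i => Real.sqrt_pos.mpr (hd i)
  set E : Matrix (Fin s) (Fin s) ℝ := Matrix.diagonal e with hE_def
  set F : Matrix (Fin s) (Fin s) ℝ := Matrix.diagonal (fun i => (e i)⁻¹) with hF_def
  have hEF : E * F = 1 := by
    rw [hE_def, hF_def, Matrix.diagonal_mul_diagonal, ← Matrix.diagonal_one,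
      show (fun i => e i * (e i)⁻¹) = fun _ => (1 : ℝ) from
        funext fun i => mul_inv_cancel₀ (he i).ne']
  have hFE : F * E = 1 := by
    rw [hE_def, hF_def, Matrix.diagonal_mul_diagonal, ← Matrix.diagonal_one,
      show (fun i => (e i)⁻¹ * e i) = fun _ => (1 : ℝ) from
        funext fun i => inv_mul_cancel₀ (he i).ne']
  have hEE : E * E = Matrix.diagonal d := by
    rw [hE_def, Matrix.diagonal_mul_diagonal,
      show (fun i => e i * e i) = d from funext fun i => Real.mul_self_sqrt (hd i).le]
  have hUUT : U * Uᵀ = 1 := mul_eq_one_comm.mp hU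
  have hVVT : V * Vᵀ = 1 := mul_eq_one_comm.mp hV
  set C : Matrix (Fin s) (Fin s) ℝ := F * (Uᵀ * V) * F with hC_def
  -- positivity of the real quadratic form of C
  have hW := real_rayleigh (Uᵀ * V) hray
  have hC : ∀ y : Fin s → ℝ, y ≠ 0 → 0 < y ⬝ᵥ (C *ᵥ y) := by
    intro y hy
    have hFy : F *ᵥ y = fun i => (e i)⁻¹ * y i := by
      funext i
      rw [hF_def, Matrix.mulVec_diagonal]
    have hFyne : F *ᵥ y ≠ 0 := by
      intro h0
      apply hy
      funext i
      have := congrFun h0 i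
      rw [hFy] at this
      have := (mul_eq_zero.mp this)
      rcases this with h | h
      · exact absurd h (inv_ne_zero (he i).ne')
      · exact h
    have hquad : y ⬝ᵥ (C *ᵥ y) = (F *ᵥ y) ⬝ᵥ ((Uᵀ * V) *ᵥ (F *ᵥ y)) := by
      rw [hC_def, ← Matrix.mulVec_mulVec, ← Matrix.mulVec_mulVec]
      rw [hFy]
      simp only [dotProduct, mulVec, hFy]
      refine Finset.sum_congr rfl fun i _ => ?_
      rw [hF_def]
      simp only [mulVec, dotProduct, Matrix.diagonal_apply, ite_mul, zero_mul,
        Finset.sum_ite_eq, Finset.mem_univ, if_true]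
      ring
    rw [hquad]
    exact hW _ hFyne
  -- the transformed matrix
  set Θ' : Matrix (Fin s × Fin n) (Fin s × Fin n) ℝ :=
    C ⊗ₖ M + τ • ((1 : Matrix (Fin s) (Fin s) ℝ) ⊗ₖ K) with hΘ'_def
  have hΘ' : IsUnit Θ' := aux_isUnit _ (fun x hx => quad_pos C hC M K hM hK τ hτ x hx)
  set P : Matrix (Fin s × Fin n) (Fin s × Fin n) ℝ := (U * E) ⊗ₖ (1 : Matrix (Fin n) (Fin n) ℝ)
    with hP_def
  set Q : Matrix (Fin s × Fin n) (Fin s × Fin n) ℝ := (E * Vᵀ) ⊗ₖ (1 : Matrix (Fin n) (Fin n) ℝ)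
    with hQ_def
  have hP : IsUnit P := by
    refine ⟨⟨P, (F * Uᵀ) ⊗ₖ (1 : Matrix (Fin n) (Fin n) ℝ), ?_, ?_⟩, rfl⟩
    · show P * _ = 1
      rw [hP_def, ← Matrix.mul_kronecker_mul, Matrix.mul_one,
        show (U * E) * (F * Uᵀ) = 1 by
          rw [Matrix.mul_assoc U E (F * Uᵀ), ← Matrix.mul_assoc E F Uᵀ, hEF, Matrix.one_mul, hUUT],
        Matrix.one_kronecker_one]
    · show _ * P = 1
      rw [hP_def, ← Matrix.mul_kronecker_mul, Matrix.mul_one,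
        show (F * Uᵀ) * (U * E) = 1 by
          rw [Matrix.mul_assoc F Uᵀ (U * E), ← Matrix.mul_assoc Uᵀ U E, hU, Matrix.one_mul, hFE],
        Matrix.one_kronecker_one]
  have hQ : IsUnit Q := by
    refine ⟨⟨Q, (V * F) ⊗ₖ (1 : Matrix (Fin n) (Fin n) ℝ), ?_, ?_⟩, rfl⟩
    · show Q * _ = 1
      rw [hQ_def, ← Matrix.mul_kronecker_mul, Matrix.mul_one,
        show (E * Vᵀ) * (V * F) = 1 by
          rw [Matrix.mul_assoc E Vᵀ (V * F), ← Matrix.mul_assoc Vᵀ V F, hV, Matrix.one_mul, hEF],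
        Matrix.one_kronecker_one]
    · show _ * Q = 1
      rw [hQ_def, ← Matrix.mul_kronecker_mul, Matrix.mul_one,
        show (V * F) * (E * Vᵀ) = 1 by
          rw [Matrix.mul_assoc V F (E * Vᵀ), ← Matrix.mul_assoc F E Vᵀ, hFE, Matrix.one_mul, hVVT],
        Matrix.one_kronecker_one]
  have hfact : (1 : Matrix (Fin s) (Fin s) ℝ) ⊗ₖ M +
      τ • ((U * Matrix.diagonal d * Vᵀ) ⊗ₖ K) = P * Θ' * Q := by
    rw [hΘ'_def, hP_def, hQ_def]
    rw [Matrix.mul_add, Matrix.add_mul, mul_smul_comm, smul_mul_assoc]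
    have h1 : U * E * (F * (Uᵀ * V) * F) * (E * Vᵀ) = 1 := by
      simp only [← Matrix.mul_assoc]
      rw [Matrix.mul_assoc U E F, hEF, Matrix.mul_one, hUUT, Matrix.one_mul,
        Matrix.mul_assoc V F E, hFE, Matrix.mul_one, hVVT]
    have h2 : U * E * (E * Vᵀ) = U * Matrix.diagonal d * Vᵀ := by
      simp only [← Matrix.mul_assoc]
      rw [Matrix.mul_assoc U E E, hEE]
    congr 1
    · rw [← Matrix.mul_kronecker_mul, ← Matrix.mul_kronecker_mul, Matrix.one_mul, Matrix.mul_one,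
        h1]
    · rw [← Matrix.mul_kronecker_mul, ← Matrix.mul_kronecker_mul, Matrix.one_mul, Matrix.mul_one,
        Matrix.mul_one, h2]
  rw [hfact]
  exact (hP.mul hΘ').mul hQ
end
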